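/- Let x ↦ Λ(x) be a differentiable family of unit vectors in ℂ² ⊗ H with D_x Λ(x) = 0 where D_x = Σ_i σ_i ⊗ (Xⁱ − xⁱ). Then for any tangent direction, differentiating the eigenvalue equation gives (Σ_i σ_i dxⁱ ⊗ id) Λ = D_x dΛ, and hence Σ_i ⟨Λ, (σ_i ⊗ id) Λ⟩ dxⁱ = 0: the vector n_x with components n_i = ⟨Λ(x), (σ_i ⊗ id) Λ(x)⟩ is orthogonal to every tangent vector of the eigenmanifold at x. -/

import Mathlib

open Matrix

noncomputable section

def pauli : Fin 3 → Matrix (Fin 2) (Fin 2) ℂ :=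
  ![!![0, 1; 1, 0], !![0, -Complex.I; Complex.I, 0], !![1, 0; 0, -1]]

variable {H : Type*} [NormedAddCommGroup H] [InnerProductSpace ℂ H] [CompleteSpace H]

def kron (σ : Matrix (Fin 2) (Fin 2) ℂ) (T : H →L[ℂ] H) :
    Matrix (Fin 2) (Fin 2) (H →L[ℂ] H) :=
  Matrix.of fun j k => σ j k • T

def mapp (M : Matrix (Fin 2) (Fin 2) (H →L[ℂ] H)) (v : PiLp 2 fun _ : Fin 2 => H) :
    PiLp 2 fun _ : Fin 2 => H :=
  WithLp.toLp 2 (fun j => ∑ k, M j k (v k))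

set_option linter.unusedSectionVars false in
lemma pauli_conj (i : Fin 3) (j k : Fin 2) : (starRingEnd ℂ) (pauli i k j) = pauli i j k := by
  fin_cases i <;> fin_cases j <;> fin_cases k <;> simp [pauli]

set_option linter.unusedSectionVars false in
/-- `mapp M` as a continuous linear map. -/
def opCLM (M : Matrix (Fin 2) (Fin 2) (H →L[ℂ] H)) :
    (PiLp 2 fun _ : Fin 2 => H) →L[ℂ] (PiLp 2 fun _ : Fin 2 => H) :=
  ((PiLp.continuousLinearEquiv 2 ℂ fun _ : Fin 2 => H).symm.toContinuousLinearMap.comp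
    (ContinuousLinearMap.pi fun j => ∑ k, (M j k).comp (ContinuousLinearMap.proj k))).comp
    (PiLp.continuousLinearEquiv 2 ℂ fun _ : Fin 2 => H).toContinuousLinearMap

set_option linter.unusedSectionVars false in
lemma opCLM_apply (M : Matrix (Fin 2) (Fin 2) (H →L[ℂ] H)) (v : PiLp 2 fun _ : Fin 2 => H) :
    opCLM M v = mapp M v := by
  ext j
  simp [opCLM, mapp, ContinuousLinearMap.sum_apply]

set_option linter.unusedSectionVars false in
lemma mapp_sum {ι : Type*} (s : Finset ι) (M : ι → Matrix (Fin 2) (Fin 2) (H →L[ℂ] H))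
    (v : PiLp 2 fun _ : Fin 2 => H) :
    mapp (∑ i ∈ s, M i) v = ∑ i ∈ s, mapp (M i) v := by
  ext j
  have h : (∑ i ∈ s, mapp (M i) v) j = ∑ i ∈ s, mapp (M i) v j :=
    by rw [WithLp.ofLp_sum]; exact Finset.sum_apply j s fun i => (mapp (M i) v).ofLp
  rw [h]
  simp [mapp, Matrix.sum_apply, ContinuousLinearMap.sum_apply, Finset.sum_add_distrib]

set_option linter.unusedSectionVars false in
lemma mapp_sub (M N : Matrix (Fin 2) (Fin 2) (H →L[ℂ] H)) (v : PiLp 2 fun _ : Fin 2 => H) :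
    mapp (M - N) v = mapp M v - mapp N v := by
  ext j
  have h : (mapp M v - mapp N v) j = mapp M v j - mapp N v j := rfl
  rw [h]
  simp [mapp, Matrix.sub_apply, Finset.sum_sub_distrib]

set_option linter.unusedSectionVars false in
lemma mapp_smul (c : ℂ) (M : Matrix (Fin 2) (Fin 2) (H →L[ℂ] H)) (v : PiLp 2 fun _ : Fin 2 => H) :
    mapp (c • M) v = c • mapp M v := by
  ext j
  have h : (c • mapp M v) j = c • mapp M v j := rfl
  rw [h]
  simp [mapp, Matrix.smul_apply, Finset.smul_sum]

set_option linter.unusedSectionVars false in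
lemma kron_expand (i : Fin 3) (T : H →L[ℂ] H) (c : ℂ) :
    kron (pauli i) (T - c • 1) = kron (pauli i) T - c • kron (pauli i) 1 := by
  ext j k
  simp [kron, Matrix.sub_apply, Matrix.smul_apply, smul_sub, smul_comm c]

set_option linter.unusedSectionVars false in
lemma inner_mapp_symm (M : Matrix (Fin 2) (Fin 2) (H →L[ℂ] H))
    (hM : ∀ j k (a b : H), (inner ℂ (M k j a) b : ℂ) = inner ℂ a (M j k b))
    (u v : PiLp 2 fun _ : Fin 2 => H) :
    (inner ℂ (mapp M u) v : ℂ) = inner ℂ u (mapp M v) := by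
  simp only [PiLp.inner_apply, mapp, sum_inner, inner_sum]
  rw [Finset.sum_comm]
  exact Finset.sum_congr rfl fun k _ => Finset.sum_congr rfl fun j _ => hM k j (u k) (v j)

/-- Decomposition of the Dirac operator application. -/
lemma mapp_decomp (X : Fin 3 → H →L[ℂ] H) (c : Fin 3 → ℝ) (v : PiLp 2 fun _ : Fin 2 => H) :
    mapp (∑ i, kron (pauli i) (X i - (c i : ℂ) • 1)) v
      = opCLM (∑ i, kron (pauli i) (X i)) v
        - ∑ i, (c i : ℂ) • opCLM (kron (pauli i) 1) v := by
  rw [mapp_sum, opCLM_apply, mapp_sum, ← Finset.sum_sub_distrib]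
  refine Finset.sum_congr rfl fun i _ => ?_
  rw [kron_expand, mapp_sub, mapp_smul, opCLM_apply]

/-- Symmetry of the Dirac operator. -/
lemma mapp_D_symm (X : Fin 3 → H →L[ℂ] H) (hX : ∀ i, IsSelfAdjoint (X i)) (c : Fin 3 → ℝ)
    (u v : PiLp 2 fun _ : Fin 2 => H) :
    (inner ℂ (mapp (∑ i, kron (pauli i) (X i - (c i : ℂ) • 1)) u) v : ℂ)
      = inner ℂ u (mapp (∑ i, kron (pauli i) (X i - (c i : ℂ) • 1)) v) := by
  refine inner_mapp_symm _ (fun j k a b => ?_) u v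
  have hT : ∀ i, IsSelfAdjoint (X i - (c i : ℂ) • (1 : H →L[ℂ] H)) := by
    intro i
    refine (hX i).sub ?_
    have : star ((c i : ℂ) • (1 : H →L[ℂ] H)) = (c i : ℂ) • (1 : H →L[ℂ] H) := by
      rw [star_smul, star_one, Complex.star_def, Complex.conj_ofReal]
    exact this
  simp only [Matrix.sum_apply, kron, Matrix.of_apply, ContinuousLinearMap.sum_apply,
    ContinuousLinearMap.smul_apply, sum_inner, inner_sum, inner_smul_left, inner_smul_right,
    pauli_conj]
  exact Finset.sum_congr rfl fun i _ => congrArg (fun z => pauli i j k * z) ((hT i).isSymmetric a b)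

/-- Along a differentiable curve t ↦ x(t) in the eigenmanifold with a
differentiable lift of unit kernel vectors Λ(x(t)) of D_x = Σᵢ σᵢ ⊗ (Xⁱ − xⁱ), the
purity normal vector n with nᵢ = ⟨Λ, (σᵢ ⊗ id)Λ⟩ is orthogonal to the velocity:
Σᵢ nᵢ ẋⁱ = 0. -/
theorem stmt9 (X : Fin 3 → H →L[ℂ] H) (hX : ∀ i, IsSelfAdjoint (X i))
    (x : ℝ → Fin 3 → ℝ) (Λ : ℝ → PiLp 2 fun _ : Fin 2 => H)
    (t : ℝ) (x' : Fin 3 → ℝ) (Λ' : PiLp 2 fun _ : Fin 2 => H)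
    (hx : ∀ i, HasDerivAt (fun s => x s i) (x' i) t)
    (hΛ : HasDerivAt Λ Λ' t)
    (hnorm : ∀ s, ‖Λ s‖ = 1)
    (hker : ∀ s, mapp (∑ i, kron (pauli i) (X i - (x s i : ℂ) • 1)) (Λ s) = 0) :
    ∑ i, (inner ℂ (Λ t) (mapp (kron (pauli i) 1) (Λ t)) : ℂ) * (x' i : ℂ) = 0 := by
  set M0 : Matrix (Fin 2) (Fin 2) (H →L[ℂ] H) := ∑ i, kron (pauli i) (X i) with hM0
  set Ki : Fin 3 → Matrix (Fin 2) (Fin 2) (H →L[ℂ] H) := fun i => kron (pauli i) 1 with hKi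
  -- rewrite the kernel condition
  have hker' : ∀ s, opCLM M0 (Λ s) = ∑ i, (x s i : ℂ) • opCLM (Ki i) (Λ s) := by
    intro s
    have h := hker s
    rw [mapp_decomp X (x s) (Λ s)] at h
    exact sub_eq_zero.mp h
  -- derivatives
  have hD1 : HasDerivAt (fun s => opCLM M0 (Λ s)) (opCLM M0 Λ') t := by
    have := ((opCLM (H := H) M0).restrictScalars ℝ).hasFDerivAt.comp_hasDerivAt t hΛ
    exact this
  have hD3 : ∀ i, HasDerivAt (fun s => opCLM (Ki i) (Λ s)) (opCLM (Ki i) Λ') t := by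
    intro i
    have := ((opCLM (H := H) (Ki i)).restrictScalars ℝ).hasFDerivAt.comp_hasDerivAt t hΛ
    exact this
  have hD4 : ∀ i, HasDerivAt (fun s => (x s i : ℂ) • opCLM (Ki i) (Λ s))
      ((x t i : ℂ) • opCLM (Ki i) Λ' + (x' i : ℂ) • opCLM (Ki i) (Λ t)) t :=
    fun i => ((hx i).ofReal_comp).smul (hD3 i)
  have hsum : HasDerivAt (fun s => ∑ i, (x s i : ℂ) • opCLM (Ki i) (Λ s))
      (∑ i, ((x t i : ℂ) • opCLM (Ki i) Λ' + (x' i : ℂ) • opCLM (Ki i) (Λ t))) t :=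
    HasDerivAt.fun_sum fun i _ => hD4 i
  have heq : (fun s => opCLM M0 (Λ s)) = fun s => ∑ i, (x s i : ℂ) • opCLM (Ki i) (Λ s) :=
    funext hker'
  rw [heq] at hD1
  have key : opCLM M0 Λ' = ∑ i, ((x t i : ℂ) • opCLM (Ki i) Λ' + (x' i : ℂ) • opCLM (Ki i) (Λ t)) :=
    hD1.unique hsum
  -- take inner products with Λ t
  have keyInner : (inner ℂ (Λ t) (opCLM M0 Λ') : ℂ)
      = ∑ i, ((x t i : ℂ) * inner ℂ (Λ t) (opCLM (Ki i) Λ')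
          + (x' i : ℂ) * inner ℂ (Λ t) (opCLM (Ki i) (Λ t))) := by
    rw [key, inner_sum]
    exact Finset.sum_congr rfl fun i _ => by rw [inner_add_right, inner_smul_right, inner_smul_right]
  -- self-adjointness kills the D ∂Λ term
  have hsa : (inner ℂ (Λ t) (opCLM M0 Λ') : ℂ)
      - ∑ i, (x t i : ℂ) * inner ℂ (Λ t) (opCLM (Ki i) Λ') = 0 := by
    have h1 : (inner ℂ (Λ t) (mapp (∑ i, kron (pauli i) (X i - (x t i : ℂ) • 1)) Λ') : ℂ)
        = inner ℂ (Λ t) (opCLM M0 Λ') - ∑ i, (x t i : ℂ) * inner ℂ (Λ t) (opCLM (Ki i) Λ') := by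
      rw [mapp_decomp X (x t) Λ', inner_sub_right, inner_sum]
      congr 1
      exact Finset.sum_congr rfl fun i _ => inner_smul_right _ _ _
    rw [← h1, ← mapp_D_symm X hX (x t) (Λ t) Λ', hker t, inner_zero_left]
  have final : ∑ i, (x' i : ℂ) * inner ℂ (Λ t) (opCLM (Ki i) (Λ t)) = 0 := by
    have := keyInner
    rw [Finset.sum_add_distrib] at this
    have h2 := hsa
    rw [this] at h2
    linear_combination h2
  calc ∑ i, (inner ℂ (Λ t) (mapp (kron (pauli i) 1) (Λ t)) : ℂ) * (x' i : ℂ)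
      = ∑ i, (x' i : ℂ) * inner ℂ (Λ t) (opCLM (Ki i) (Λ t)) :=
        Finset.sum_congr rfl fun i _ => by rw [opCLM_apply, mul_comm]
    _ = 0 := final

end
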